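/- Let X be a finite-dimensional real normed space. Then X is universally left-stable and universally right-stable: for every real Banach space Z, both the pair (X, Z) and the pair (Z, X) are stable. -/

import Mathlib

open scoped ENNReal ZeroAtInfty

noncomputable section

/-- `f : X → Y` is a *standard ε-isometry*: `f 0 = 0` and
`|‖f x - f y‖ - ‖x - y‖| ≤ ε` for all `x, y`. -/
def StdEpsIsom {X Y : Type*} [NormedAddCommGroup X] [NormedAddCommGroup Y]
    (ε : ℝ) (f : X → Y) : Prop :=
  f 0 = 0 ∧ ∀ x y : X, |‖f x - f y‖ - ‖x - y‖| ≤ ε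

/-- `L(f)`: the closed linear span of the range of `f` in `Y`. -/
def Lf {X Y : Type*} [NormedAddCommGroup Y] [NormedSpace ℝ Y] (f : X → Y) :
    Submodule ℝ Y :=
  (Submodule.span ℝ (Set.range f)).topologicalClosure

theorem mem_Lf {X Y : Type*} [NormedAddCommGroup Y] [NormedSpace ℝ Y] (f : X → Y) (x : X) :
    f x ∈ Lf f :=
  Submodule.le_topologicalClosure _ (Submodule.subset_span ⟨x, rfl⟩)

/-- A standard ε-isometry `f` is *stable* if for some `α, γ > 0` there is a bounded linear
operator `T : L(f) → X` with `‖T‖ ≤ α` such that `‖T (f x) - x‖ ≤ γ ε` for all `x`. -/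
def IsStable {X Y : Type*} [NormedAddCommGroup X] [NormedSpace ℝ X]
    [NormedAddCommGroup Y] [NormedSpace ℝ Y] (ε : ℝ) (f : X → Y) : Prop :=
  ∃ α γ : ℝ, 0 < α ∧ 0 < γ ∧
    ∃ T : Lf f →L[ℝ] X, ‖T‖ ≤ α ∧ ∀ x : X, ‖T ⟨f x, mem_Lf f x⟩ - x‖ ≤ γ * ε

/-- The pair `(X, Y)` is *stable* if every standard ε-isometry `f : X → Y` (ε > 0) is stable. -/
def PairStable (X Y : Type*) [NormedAddCommGroup X] [NormedSpace ℝ X]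
    [NormedAddCommGroup Y] [NormedSpace ℝ Y] : Prop :=
  ∀ ε : ℝ, 0 < ε → ∀ f : X → Y, StdEpsIsom ε f → IsStable ε f

universe u

/-! ### Auxiliary lemmas -/

open Filter Topology Metric

/-- Convexity inequality: if the norm has derivative `g` at `u`, then
`g w ≤ ‖u + w‖ - ‖u‖`. -/
lemma grad_le_sub {X : Type*} [NormedAddCommGroup X] [NormedSpace ℝ X]
    {g : X →L[ℝ] ℝ} {u : X} (hu : HasFDerivAt (fun x : X => ‖x‖) g u) (w : X) :
    g w ≤ ‖u + w‖ - ‖u‖ := by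
  have hlim := hu.lim_real w
  refine le_of_tendsto hlim ?_
  filter_upwards [eventually_ge_atTop (1:ℝ)] with t ht
  have ht0 : 0 < t := lt_of_lt_of_le one_pos ht
  have hti : 0 ≤ t⁻¹ := by positivity
  have hti1 : t⁻¹ ≤ 1 := by
    rw [inv_le_one_iff₀]; right; exact ht
  have h1 : u + t⁻¹ • w = (1 - t⁻¹) • u + t⁻¹ • (u + w) := by
    rw [smul_add, sub_smul, one_smul]; abel
  have h2 : ‖u + t⁻¹ • w‖ ≤ (1 - t⁻¹) * ‖u‖ + t⁻¹ * ‖u + w‖ := by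
    rw [h1]
    refine (norm_add_le _ _).trans ?_
    rw [norm_smul, norm_smul, Real.norm_eq_abs, Real.norm_eq_abs,
      abs_of_nonneg (by linarith), abs_of_nonneg hti]
  have h3 : t • (‖u + t⁻¹ • w‖ - ‖u‖) = t * (‖u + t⁻¹ • w‖ - ‖u‖) := rfl
  rw [h3]
  have h4 : t * t⁻¹ = 1 := mul_inv_cancel₀ (ne_of_gt ht0)
  nlinarith [norm_nonneg u, norm_nonneg (u + w)]

/-- If a vector is annihilated by the derivative of the norm at every point of
differentiability, it is zero. -/
lemma eq_zero_of_grad_zero {X : Type*} [NormedAddCommGroup X] [NormedSpace ℝ X]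
    [FiniteDimensional ℝ X] {v : X}
    (hv : ∀ (g : X →L[ℝ] ℝ) (u : X), HasFDerivAt (fun x : X => ‖x‖) g u → g v = 0) :
    v = 0 := by
  have main : ∀ w : X, (∀ (g : X →L[ℝ] ℝ) (u : X), HasFDerivAt (fun x : X => ‖x‖) g u → g w = 0) →
      ∀ x : X, ‖x‖ ≤ ‖x + w‖ := by
    intro w hw x
    have hd : Dense {y : X | DifferentiableAt ℝ (fun x : X => ‖x‖) y} := by
      simpa using dense_differentiableAt_norm (E := X)
    have hsub : {y : X | DifferentiableAt ℝ (fun x : X => ‖x‖) y} ⊆ {y : X | ‖y‖ ≤ ‖y + w‖} := by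
      intro y hy
      have hder := hy.hasFDerivAt
      have h := grad_le_sub hder w
      have h0 := hw _ _ hder
      simp only [Set.mem_setOf_eq]
      linarith
    have hclosed : IsClosed {y : X | ‖y‖ ≤ ‖y + w‖} :=
      isClosed_le (continuous_norm) ((continuous_id.add continuous_const).norm)
    have : (Set.univ : Set X) ⊆ {y : X | ‖y‖ ≤ ‖y + w‖} := by
      rw [← hd.closure_eq]
      exact hclosed.closure_subset_iff.2 hsub
    exact this (Set.mem_univ x)
  have h1 := main (-v) (fun g u h => by simpa using hv g u h) v
  simp only [add_neg_cancel, norm_zero] at h1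
  exact norm_le_zero_iff.1 h1

/-- There is a finite family of derivatives of the norm which separates points. -/
lemma exists_family {X : Type*} [NormedAddCommGroup X] [NormedSpace ℝ X]
    [FiniteDimensional ℝ X] :
    ∃ s : Finset (X →L[ℝ] ℝ), (∀ g ∈ s, ∃ u : X, HasFDerivAt (fun x : X => ‖x‖) g u) ∧
      ∀ v : X, (∀ g ∈ s, g v = 0) → v = 0 := by
  classical
  suffices H : ∀ (k : ℕ) (V : Submodule ℝ X), Module.finrank ℝ V ≤ k →
      ∃ s : Finset (X →L[ℝ] ℝ), (∀ g ∈ s, ∃ u : X, HasFDerivAt (fun x : X => ‖x‖) g u) ∧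
        ∀ v ∈ V, (∀ g ∈ s, g v = 0) → v = 0 by
    obtain ⟨s, h1, h2⟩ := H (Module.finrank ℝ (⊤ : Submodule ℝ X)) ⊤ le_rfl
    exact ⟨s, h1, fun v hv => h2 v trivial hv⟩
  intro k
  induction k with
  | zero =>
    intro V hV
    refine ⟨∅, by simp, ?_⟩
    have hbot : V = ⊥ := Submodule.finrank_eq_zero.1 (Nat.le_zero.1 hV)
    intro v hv _
    rw [hbot] at hv
    simpa using hv
  | succ k ih =>
    intro V hV
    by_cases hbot : V = ⊥
    · refine ⟨∅, by simp, ?_⟩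
      intro v hv _
      rw [hbot] at hv
      simpa using hv
    · obtain ⟨v₀, hv₀V, hv₀⟩ := Submodule.exists_mem_ne_zero_of_ne_bot hbot
      have hex : ¬ (∀ (g : X →L[ℝ] ℝ) (u : X), HasFDerivAt (fun x : X => ‖x‖) g u → g v₀ = 0) :=
        fun h => hv₀ (eq_zero_of_grad_zero h)
      push_neg at hex
      obtain ⟨g₀, u₀, hder₀, hne₀⟩ := hex
      set V' : Submodule ℝ X := V ⊓ LinearMap.ker (g₀ : X →ₗ[ℝ] ℝ) with hV'
      have hlt : V' < V := by
        refine lt_of_le_of_ne inf_le_left ?_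
        intro hEq
        have : v₀ ∈ V' := hEq ▸ hv₀V
        exact hne₀ ((Submodule.mem_inf.1 this).2)
      have hrk : Module.finrank ℝ V' ≤ k := by
        have := Submodule.finrank_lt_finrank_of_lt hlt
        omega
      obtain ⟨s', hs'1, hs'2⟩ := ih V' hrk
      refine ⟨insert g₀ s', ?_, ?_⟩
      · intro g hg
        rcases Finset.mem_insert.1 hg with h | h
        · exact ⟨u₀, h ▸ hder₀⟩
        · exact hs'1 g h
      · intro v hvV hvz
        have hv0 : g₀ v = 0 := hvz g₀ (Finset.mem_insert_self _ _)
        have hvV' : v ∈ V' := Submodule.mem_inf.2 ⟨hvV, hv0⟩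
        exact hs'2 v hvV' (fun g hg => hvz g (Finset.mem_insert_of_mem hg))

/-- Weak stability: for any derivative `g` of the norm (at some point `u`), there is a
functional `φ` on `Y` of norm at most one such that `φ ∘ f` approximates `g` up to `3ε`. -/
lemma weakA {X Y : Type*} [NormedAddCommGroup X] [NormedSpace ℝ X]
    [NormedAddCommGroup Y] [NormedSpace ℝ Y] {ε : ℝ} {f : X → Y}
    (hf : StdEpsIsom ε f) {g : X →L[ℝ] ℝ} {u : X}
    (hu : HasFDerivAt (fun x : X => ‖x‖) g u) :
    ∃ φ : Y →L[ℝ] ℝ, ‖φ‖ ≤ 1 ∧ ∀ x : X, |φ (f x) - g x| ≤ 3 * ε := by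
  obtain ⟨hf0, hfd⟩ := hf
  have hψex : ∀ t : ℝ, ∃ ψ : Y →L[ℝ] ℝ, ‖ψ‖ ≤ 1 ∧
      ψ (f (t • u) - f (-(t • u))) = ‖f (t • u) - f (-(t • u))‖ :=
    fun t => exists_dual_vector'' ℝ _
  choose ψ hψ1 hψ2 using hψex
  have hval : ∀ (t : ℝ) (y : Y), |ψ t y| ≤ ‖y‖ := by
    intro t y
    have h1 := (ψ t).le_opNorm y
    rw [Real.norm_eq_abs] at h1
    nlinarith [hψ1 t, norm_nonneg y, abs_nonneg ((ψ t) y)]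
  have hub : ∀ t : ℝ, 0 ≤ t → ∀ x : X,
      t * ‖u‖ - ‖t • u - x‖ - 3 * ε ≤ ψ t (f x) ∧
      ψ t (f x) ≤ ‖x + t • u‖ - t * ‖u‖ + 3 * ε := by
    intro t ht x
    set a := f (t • u) with ha
    set b := f (-(t • u)) with hb
    have hnorm_tu : ‖t • u‖ = t * ‖u‖ := by
      rw [norm_smul, Real.norm_eq_abs, abs_of_nonneg ht]
    have hab : 2 * (t * ‖u‖) - ε ≤ ‖a - b‖ := by
      have h := abs_le.1 (hfd (t • u) (-(t • u)))
      have h2 : ‖t • u - -(t • u)‖ = 2 * (t * ‖u‖) := by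
        rw [sub_neg_eq_add, ← two_smul ℝ (t • u), norm_smul, hnorm_tu, Real.norm_eq_abs]
        norm_num
      linarith [h.1, h2 ▸ h.1]
    have hA : ‖a‖ ≤ t * ‖u‖ + ε := by
      have h := abs_le.1 (hfd (t • u) 0)
      rw [hf0, sub_zero, sub_zero, hnorm_tu] at h
      linarith [h.2]
    have hB : ‖b‖ ≤ t * ‖u‖ + ε := by
      have h := abs_le.1 (hfd (-(t • u)) 0)
      rw [hf0, sub_zero, sub_zero, norm_neg, hnorm_tu] at h
      linarith [h.2]
    have hψab : ψ t a - ψ t b = ‖a - b‖ := by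
      rw [← map_sub]; exact hψ2 t
    have hψaA : |ψ t a| ≤ t * ‖u‖ + ε := le_trans (hval t a) hA
    have hψbB : |ψ t b| ≤ t * ‖u‖ + ε := le_trans (hval t b) hB
    have hψa_ge : t * ‖u‖ - 2 * ε ≤ ψ t a := by
      have := abs_le.1 hψbB
      linarith [hψab ▸ hab]
    have hψb_le : ψ t b ≤ -(t * ‖u‖) + 2 * ε := by
      have := abs_le.1 hψaA
      linarith [hψab ▸ hab]
    have hax : |ψ t a - ψ t (f x)| ≤ ‖t • u - x‖ + ε := by
      rw [← map_sub]
      refine le_trans (hval t _) ?_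
      have h := abs_le.1 (hfd (t • u) x)
      linarith [h.2]
    have hbx : |ψ t (f x) - ψ t b| ≤ ‖x + t • u‖ + ε := by
      rw [← map_sub]
      refine le_trans (hval t _) ?_
      have h := abs_le.1 (hfd x (-(t • u)))
      rw [sub_neg_eq_add] at h
      linarith [h.2]
    constructor
    · have := abs_le.1 hax
      linarith
    · have := abs_le.1 hbx
      linarith
  have lim1 : ∀ x : X, Tendsto (fun t : ℝ => ‖x + t • u‖ - t * ‖u‖) atTop (𝓝 (g x)) := by
    intro x
    have hlim := hu.lim_real x
    refine hlim.congr' ?_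
    filter_upwards [eventually_gt_atTop (0:ℝ)] with t ht
    have h1 : t • (u + t⁻¹ • x) = t • u + x := by
      rw [smul_add, smul_smul, mul_inv_cancel₀ (ne_of_gt ht), one_smul]
    have h2 : t • (‖u + t⁻¹ • x‖ - ‖u‖) = t * ‖u + t⁻¹ • x‖ - t * ‖u‖ := by
      simp [smul_eq_mul, mul_sub]
    rw [h2]
    rw [show t * ‖u + t⁻¹ • x‖ = ‖t • (u + t⁻¹ • x)‖ by
      rw [norm_smul, Real.norm_eq_abs, abs_of_pos ht]]
    rw [h1, add_comm (t • u) x]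
  have lim2 : ∀ x : X, Tendsto (fun t : ℝ => t * ‖u‖ - ‖t • u - x‖) atTop (𝓝 (g x)) := by
    intro x
    have h := (lim1 (-x)).neg
    rw [map_neg, neg_neg] at h
    refine h.congr (fun t => ?_)
    have : t • u - x = -x + t • u := by abel
    rw [this]; ring
  let U : Ultrafilter ℝ := Ultrafilter.of atTop
  have hU : (U : Filter ℝ) ≤ atTop := Ultrafilter.of_le _
  let Ψ : ℝ → WeakDual ℝ Y := fun t => StrongDual.toWeakDual (ψ t)
  have hmem : ∀ t, Ψ t ∈ (WeakDual.toStrongDual ⁻¹' closedBall 0 1) := by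
    intro t
    simp only [Set.mem_preimage, mem_closedBall_zero_iff]
    exact hψ1 t
  have hcpt : IsCompact (WeakDual.toStrongDual ⁻¹' closedBall (0 : StrongDual ℝ Y) 1) :=
    WeakDual.isCompact_closedBall (𝕜 := ℝ) (E := Y) 0 1
  obtain ⟨Φ, hΦmem, hΦle⟩ := hcpt.ultrafilter_le_nhds (U.map Ψ)
    (by
      rw [Ultrafilter.coe_map, Filter.le_principal_iff]
      exact Filter.mem_map.2 (Filter.univ_mem' hmem))
  set φ : Y →L[ℝ] ℝ := WeakDual.toStrongDual Φ with hφ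
  have hφnorm : ‖φ‖ ≤ 1 := by
    have := hΦmem
    simpa [mem_closedBall_zero_iff] using this
  have heval : ∀ y : Y, Tendsto (fun t => ψ t y) (U : Filter ℝ) (𝓝 (φ y)) := by
    intro y
    have hc := (WeakDual.eval_continuous (𝕜 := ℝ) (E := Y) y).tendsto Φ
    have hΨ : Tendsto Ψ (U : Filter ℝ) (𝓝 Φ) := by
      rwa [Ultrafilter.coe_map] at hΦle
    exact hc.comp hΨ
  refine ⟨φ, hφnorm, fun x => ?_⟩
  have hupper : φ (f x) ≤ g x + 3 * ε := by
    refine le_of_tendsto_of_tendsto (heval (f x))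
      (((lim1 x).add tendsto_const_nhds).mono_left hU) ?_
    filter_upwards [hU (eventually_ge_atTop (0:ℝ))] with t ht
    exact (hub t ht x).2
  have hlower : g x - 3 * ε ≤ φ (f x) := by
    refine le_of_tendsto_of_tendsto
      (((lim2 x).sub tendsto_const_nhds).mono_left hU) (heval (f x)) ?_
    filter_upwards [hU (eventually_ge_atTop (0:ℝ))] with t ht
    linarith [(hub t ht x).1]
  rw [abs_le]
  constructor <;> linarith

/-- Every standard ε-isometry from a finite-dimensional space is stable. -/
lemma isStable_of_finiteDimensional {X Y : Type*} [NormedAddCommGroup X] [NormedSpace ℝ X]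
    [FiniteDimensional ℝ X] [NormedAddCommGroup Y] [NormedSpace ℝ Y]
    {ε : ℝ} (hε : 0 < ε) {f : X → Y} (hf : StdEpsIsom ε f) : IsStable ε f := by
  classical
  obtain ⟨s, hder, hsep⟩ := exists_family (X := X)
  have hφex : ∀ i : {g // g ∈ s}, ∃ φ : Y →L[ℝ] ℝ, ‖φ‖ ≤ 1 ∧
      ∀ x : X, |φ (f x) - i.1 x| ≤ 3 * ε := by
    intro i
    obtain ⟨u, hu⟩ := hder i.1 i.2
    exact weakA hf hu
  choose φ hφ1 hφ2 using hφex
  let P : X →ₗ[ℝ] ({g // g ∈ s} → ℝ) := LinearMap.pi (fun i => (i.1 : X →ₗ[ℝ] ℝ))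
  have hker : LinearMap.ker P = ⊥ := by
    rw [LinearMap.ker_eq_bot']
    intro v hv
    refine hsep v (fun g hg => ?_)
    exact congrFun hv ⟨g, hg⟩
  obtain ⟨Q, hQ⟩ := P.exists_leftInverse_of_injective hker
  let Qc : ({g // g ∈ s} → ℝ) →L[ℝ] X := LinearMap.toContinuousLinearMap Q
  let E : Y →L[ℝ] ({g // g ∈ s} → ℝ) := ContinuousLinearMap.pi φ
  let T : (Lf f) →L[ℝ] X := Qc.comp (E.comp (Lf f).subtypeL)
  refine ⟨‖T‖ + 1, 3 * ‖Qc‖ + 1, by positivity, by positivity, T,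
    by linarith [norm_nonneg T], fun x => ?_⟩
  have hTx : T ⟨f x, mem_Lf f x⟩ = Qc (fun i => φ i (f x)) := rfl
  have hx : Qc (P x) = x := by
    have : Q (P x) = x := by
      have := congrArg (fun (L : _ →ₗ[ℝ] X) => L x) hQ
      simpa using this
    simpa [Qc] using this
  have hsub : T ⟨f x, mem_Lf f x⟩ - x = Qc ((fun i => φ i (f x)) - P x) := by
    rw [map_sub, hTx, hx]
  rw [hsub]
  have hw : ‖(fun i => φ i (f x)) - P x‖ ≤ 3 * ε := by
    refine (pi_norm_le_iff_of_nonneg (by positivity)).2 (fun i => ?_)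
    have h := hφ2 i x
    simp only [Pi.sub_apply]
    simpa [P, Real.norm_eq_abs] using h
  calc ‖Qc ((fun i => φ i (f x)) - P x)‖ ≤ ‖Qc‖ * ‖(fun i => φ i (f x)) - P x‖ :=
        Qc.le_opNorm _
    _ ≤ ‖Qc‖ * (3 * ε) := by
        exact mul_le_mul_of_nonneg_left hw (norm_nonneg _)
    _ ≤ (3 * ‖Qc‖ + 1) * ε := by nlinarith [norm_nonneg Qc]

/-- If there is a standard ε-isometry into a finite-dimensional space, then the domain is
finite-dimensional as well. -/
lemma finDim_of_isom {Z X : Type*} [NormedAddCommGroup Z] [NormedSpace ℝ Z]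
    [NormedAddCommGroup X] [NormedSpace ℝ X] [FiniteDimensional ℝ X]
    {ε : ℝ} (hε : 0 < ε) {f : Z → X} (hf : StdEpsIsom ε f) : FiniteDimensional ℝ Z := by
  by_contra h
  obtain ⟨R, z, hR1, hzR, hsep⟩ := exists_seq_norm_le_one_le_norm_sub (𝕜 := ℝ) h
  set c : ℝ := 2 * ε + 1 with hc
  have hc0 : 0 < c := by positivity
  set y : ℕ → X := fun n => f (c • z n) with hy
  have hyb : ∀ n, ‖y n‖ ≤ c * R + ε := by
    intro n
    have h1 := abs_le.1 (hf.2 (c • z n) 0)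
    rw [hf.1, sub_zero, sub_zero] at h1
    have h2 : ‖c • z n‖ ≤ c * R := by
      rw [norm_smul, Real.norm_eq_abs, abs_of_pos hc0]
      exact mul_le_mul_of_nonneg_left (hzR n) hc0.le
    linarith [h1.2]
  have hysep : ∀ m n : ℕ, m ≠ n → ε + 1 ≤ ‖y m - y n‖ := by
    intro m n hmn
    have h1 := abs_le.1 (hf.2 (c • z m) (c • z n))
    have h3 : c ≤ ‖c • z m - c • z n‖ := by
      rw [← smul_sub, norm_smul, Real.norm_eq_abs, abs_of_pos hc0]
      nlinarith [hsep hmn]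
    have := h1.1
    simp only [hy] at this ⊢
    linarith
  have hcomp : IsCompact (closedBall (0 : X) (c * R + ε)) := isCompact_closedBall _ _
  obtain ⟨t, htfin, htcov⟩ := (Metric.totallyBounded_iff.1 hcomp.totallyBounded)
    ((ε + 1) / 2) (by linarith)
  have hchoice : ∀ n : ℕ, ∃ p : t, y n ∈ ball (p : X) ((ε + 1) / 2) := by
    intro n
    have hmem : y n ∈ closedBall (0 : X) (c * R + ε) := by
      simpa [mem_closedBall, dist_zero_right] using hyb n
    have := htcov hmem
    simp only [Set.mem_iUnion] at this
    obtain ⟨p, hp, hball⟩ := this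
    exact ⟨⟨p, hp⟩, hball⟩
  choose ctr hctr using hchoice
  have : Finite t := htfin
  obtain ⟨m, n, hmn, heq⟩ := Finite.exists_ne_map_eq_of_infinite ctr
  have d1 := hctr m
  have d2 := hctr n
  rw [heq] at d1
  have hlt : dist (y m) (y n) < ε + 1 := by
    calc dist (y m) (y n) ≤ dist (y m) ((ctr n : X)) + dist (y n) ((ctr n : X)) :=
          dist_triangle_right _ _ _
      _ < (ε + 1) / 2 + (ε + 1) / 2 := add_lt_add (mem_ball.1 d1) (mem_ball.1 d2)
      _ = ε + 1 := by ring
  rw [dist_eq_norm] at hlt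
  linarith [hysep m n hmn]

/-- Every finite-dimensional real normed space is universally left-stable and universally
right-stable. -/
theorem stmt4 {X : Type u} [NormedAddCommGroup X] [NormedSpace ℝ X] [FiniteDimensional ℝ X] :
    ∀ (Z : Type u) [NormedAddCommGroup Z] [NormedSpace ℝ Z] [CompleteSpace Z],
      PairStable X Z ∧ PairStable Z X := by
  intro Z _ _ _
  constructor
  · intro ε hε f hf
    exact isStable_of_finiteDimensional hε hf
  · intro ε hε f hf
    have := finDim_of_isom hε hf
    exact isStable_of_finiteDimensional hε hf
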